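/- Every positive bounded linear operator T : c₀ → c₀ extends uniquely to a positive order continuous bounded linear operator S on ℓ∞. Moreover, ‖T‖ = ‖S‖ = ‖S𝟙‖ = lim_{N→∞} ‖T 𝟙_{{1,…,N}}‖ = ‖sup_{N∈ℕ} T 𝟙_{{1,…,N}}‖, where 𝟙 is the constant-one sequence and 𝟙_{{1,…,N}} is the indicator sequence of the first N coordinates. -/

import Mathlib

open Filter BoundedContinuousFunction ZeroAtInftyContinuousMap
open scoped ZeroAtInfty

/-- A bounded linear operator `S` on `ℓ∞` (modelled as `ℕ →ᵇ ℝ`) is order continuous if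
for every decreasing net in `ℓ∞` with infimum `0` the image net has infimum `0`. -/
def IsOrderContinuousOp (S : (ℕ →ᵇ ℝ) →L[ℝ] (ℕ →ᵇ ℝ)) : Prop :=
  ∀ (ι : Type) (p : Preorder ι), Nonempty ι →
    (∀ i j : ι, ∃ k : ι, p.le i k ∧ p.le j k) →
    ∀ x : ι → (ℕ →ᵇ ℝ), (∀ i j : ι, p.le i j → x j ≤ x i) →
      IsGLB (Set.range x) 0 → IsGLB (Set.range fun i => S (x i)) 0

namespace Stmt9

lemma c0_sum_apply {ι : Type*} (s : Finset ι) (f : ι → C₀(ℕ, ℝ)) (k : ℕ) :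
    (∑ i ∈ s, f i) k = ∑ i ∈ s, f i k :=
  map_sum (AddMonoidHom.mk' (fun g : C₀(ℕ, ℝ) => g k) (fun _ _ => rfl)) f s

lemma c0_abs_apply_le_norm (f : C₀(ℕ, ℝ)) (k : ℕ) : |f k| ≤ ‖f‖ := by
  rw [← norm_toBCF_eq_norm, ← Real.norm_eq_abs]
  exact f.toBCF.norm_coe_le_norm k

noncomputable def ee (n : ℕ) : C₀(ℕ, ℝ) :=
  { toFun := fun k => if k = n then 1 else 0
    continuous_toFun := continuous_of_discreteTopology
    zero_at_infty' := by
      rw [cocompact_eq_atTop]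
      refine tendsto_const_nhds.congr' ?_
      filter_upwards [eventually_gt_atTop n] with k hk
      simp [Nat.ne_of_gt hk] }

@[simp] lemma ee_apply (n k : ℕ) : ee n k = if k = n then 1 else 0 := rfl

lemma ee_nonneg (n k : ℕ) : 0 ≤ ee n k := by simp only [ee_apply]; positivity

noncomputable def trunc (x : ℕ →ᵇ ℝ) (N : ℕ) : C₀(ℕ, ℝ) :=
  ∑ n ∈ Finset.range N, x n • ee n

lemma trunc_apply (x : ℕ →ᵇ ℝ) (N k : ℕ) :
    trunc x N k = if k < N then x k else 0 := by
  rw [trunc, c0_sum_apply]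
  simp only [ZeroAtInftyContinuousMap.coe_smul, Pi.smul_apply, ee_apply, smul_eq_mul,
    mul_ite, mul_one, mul_zero]
  rw [Finset.sum_ite_eq (Finset.range N) k (fun n => x n)]
  simp [Finset.mem_range]

lemma norm_trunc_le (x : ℕ →ᵇ ℝ) (N : ℕ) : ‖trunc x N‖ ≤ ‖x‖ := by
  rw [← norm_toBCF_eq_norm]
  refine BoundedContinuousFunction.norm_le (norm_nonneg x) |>.2 fun k => ?_
  show ‖trunc x N k‖ ≤ ‖x‖
  rw [trunc_apply]
  split
  · exact x.norm_coe_le_norm k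
  · simp [norm_nonneg]

lemma tendsto_trunc (x : C₀(ℕ, ℝ)) :
    Tendsto (fun N => trunc x.toBCF N) atTop (nhds x) := by
  rw [Metric.tendsto_atTop]
  intro ε hε
  have hx : Tendsto x atTop (nhds 0) := by
    have := zero_at_infty x
    rwa [cocompact_eq_atTop] at this
  rw [Metric.tendsto_atTop] at hx
  obtain ⟨M, hM⟩ := hx (ε/2) (by linarith)
  refine ⟨M, fun N hN => ?_⟩
  rw [dist_eq_norm, ← norm_toBCF_eq_norm]
  have h2 : ‖(trunc x.toBCF N - x).toBCF‖ ≤ ε/2 := by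
    refine (BoundedContinuousFunction.norm_le (by linarith)).2 fun k => ?_
    show ‖(trunc x.toBCF N - x) k‖ ≤ ε/2
    rw [ZeroAtInftyContinuousMap.coe_sub, Pi.sub_apply, trunc_apply]
    split
    · simp only [ZeroAtInftyContinuousMap.toBCF_apply]
      simp
      linarith
    · rename_i h
      have hk : M ≤ k := le_trans hN (not_lt.1 h)
      have := hM k hk
      rw [dist_eq_norm, sub_zero] at this
      rw [zero_sub, norm_neg]
      linarith
  linarith

lemma continuous_c0_eval (k : ℕ) : Continuous (fun f : C₀(ℕ, ℝ) => f k) := by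
  have h1 : Continuous (fun f : ℕ →ᵇ ℝ => f k) :=
    continuous_eval_const k
  exact h1.comp (isometry_toBCF.continuous)

noncomputable def eeb (n : ℕ) : ℕ →ᵇ ℝ :=
  BoundedContinuousFunction.ofNormedAddCommGroup (fun k => if k = n then 1 else 0)
    continuous_of_discreteTopology 1 (fun k => by split <;> simp)

lemma exists_lt_of_glb {ι : Type} [Preorder ι] [Nonempty ι]
    (y : ι → ℕ →ᵇ ℝ) (h0 : ∀ i, (0 : ℕ →ᵇ ℝ) ≤ y i)
    (hglb : IsGLB (Set.range y) 0) (k : ℕ) {ε : ℝ} (hε : 0 < ε) :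
    ∃ i, y i k < ε := by
  by_contra h
  push_neg at h
  have hb : (ε • eeb k) ∈ lowerBounds (Set.range y) := by
    rintro _ ⟨i, rfl⟩
    intro j
    show ε • (if j = k then (1:ℝ) else 0) ≤ y i j
    split
    · rename_i hj; subst hj; simpa using h i
    · simpa using h0 i j
  have h2 := hglb.2 hb
  have h3 : (ε • eeb k) k ≤ (0 : ℕ →ᵇ ℝ) k := h2 k
  have h4 : (ε • eeb k) k = ε := by
    show ε • (if k = k then (1:ℝ) else 0) = ε
    simp
  rw [h4] at h3
  simp only [BoundedContinuousFunction.coe_zero, Pi.zero_apply] at h3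
  linarith

lemma key_est (A : ℕ → ℝ) (hA0 : ∀ n, 0 ≤ A n) (hAsum : Summable A)
    {ι : Type} [Preorder ι] [Nonempty ι]
    (hdir : ∀ i j : ι, ∃ k : ι, i ≤ k ∧ j ≤ k)
    (x : ι → ℕ →ᵇ ℝ) (hmono : ∀ i j : ι, i ≤ j → x j ≤ x i)
    (hx0 : ∀ i, (0 : ℕ →ᵇ ℝ) ≤ x i)
    (hglb : IsGLB (Set.range x) 0)
    (hsum : ∀ i, Summable (fun n => A n * x i n))
    {ε : ℝ} (hε : 0 < ε) :
    ∃ i, (∑' n, A n * x i n) ≤ ε := by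
  haveI : IsDirected ι (· ≤ ·) := ⟨hdir⟩
  obtain ⟨i₀⟩ := (inferInstance : Nonempty ι)
  set tA := ∑' n, A n with htA
  have htA0 : 0 ≤ tA := tsum_nonneg hA0
  set M := ‖x i₀‖ with hM
  have hM0 : 0 ≤ M := norm_nonneg _
  have hδ : (0:ℝ) < ε / (2 * (M + 1)) := by positivity
  obtain ⟨N, hN⟩ : ∃ N, tA - ∑ n ∈ Finset.range N, A n < ε / (2 * (M + 1)) := by
    have := hAsum.hasSum.tendsto_sum_nat
    rw [Metric.tendsto_atTop] at this
    obtain ⟨N, hN⟩ := this _ hδ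
    refine ⟨N, ?_⟩
    have := hN N le_rfl
    rw [Real.dist_eq, abs_sub_comm] at this
    calc tA - ∑ n ∈ Finset.range N, A n ≤ |tA - ∑ n ∈ Finset.range N, A n| := le_abs_self _
      _ < _ := this
  have hδ' : (0:ℝ) < ε / (2 * (tA + 1)) := by positivity
  have hch : ∀ n : ℕ, ∃ i : ι, x i n < ε / (2 * (tA + 1)) :=
    fun n => exists_lt_of_glb x hx0 hglb n hδ'
  choose f hf using hch
  classical
  obtain ⟨j, hj⟩ := Finset.exists_le (insert i₀ ((Finset.range N).image f))
  have hji₀ : i₀ ≤ j := hj i₀ (Finset.mem_insert_self _ _)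
  have hjf : ∀ n < N, f n ≤ j := fun n hn =>
    hj (f n) (Finset.mem_insert_of_mem (Finset.mem_image_of_mem f (Finset.mem_range.2 hn)))
  refine ⟨j, ?_⟩
  have hxj0 : ∀ m, 0 ≤ x j m := fun m => hx0 j m
  have hxjM : ∀ m, x j m ≤ M := fun m => by
    calc x j m ≤ x i₀ m := hmono i₀ j hji₀ m
      _ ≤ |x i₀ m| := le_abs_self _
      _ ≤ M := by rw [hM, ← Real.norm_eq_abs]; exact (x i₀).norm_coe_le_norm m
  have hsplit := (Summable.sum_add_tsum_nat_add (f := fun n => A n * x j n) N (hsum j)).symm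
  rw [hsplit]
  have hpart1 : ∑ n ∈ Finset.range N, A n * x j n ≤ ε / 2 := by
    have h1 : ∀ n ∈ Finset.range N, A n * x j n ≤ A n * (ε / (2 * (tA + 1))) := by
      intro n hn
      refine mul_le_mul_of_nonneg_left ?_ (hA0 n)
      calc x j n ≤ x (f n) n := hmono (f n) j (hjf n (Finset.mem_range.1 hn)) n
        _ ≤ ε / (2 * (tA + 1)) := (hf n).le
    calc ∑ n ∈ Finset.range N, A n * x j n
        ≤ ∑ n ∈ Finset.range N, A n * (ε / (2 * (tA + 1))) := Finset.sum_le_sum h1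
      _ = (∑ n ∈ Finset.range N, A n) * (ε / (2 * (tA + 1))) := by rw [Finset.sum_mul]
      _ ≤ tA * (ε / (2 * (tA + 1))) := by
          refine mul_le_mul_of_nonneg_right ?_ hδ'.le
          exact Summable.sum_le_tsum _ (fun n _ => hA0 n) hAsum
      _ ≤ ε / 2 := by
          rw [mul_div_assoc', div_le_div_iff₀ (by positivity) (by norm_num)]
          nlinarith
  have hpart2 : (∑' m, A (m + N) * x j (m + N)) ≤ ε / 2 := by
    have hsumA' : Summable (fun m => A (m + N)) := (summable_nat_add_iff N).2 hAsum
    have hsum' : Summable (fun m => A (m + N) * x j (m + N)) := by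
      have := (summable_nat_add_iff (f := fun n => A n * x j n) N).2 (hsum j)
      exact this
    have h1 : (∑' m, A (m + N) * x j (m + N)) ≤ ∑' m, A (m + N) * M := by
      refine Summable.tsum_le_tsum (fun m => mul_le_mul_of_nonneg_left (hxjM _) (hA0 _)) hsum'
        (hsumA'.mul_right M)
    have h2 : (∑' m, A (m + N) * M) = (∑' m, A (m + N)) * M := tsum_mul_right
    have h3 : (∑' m, A (m + N)) = tA - ∑ n ∈ Finset.range N, A n := by
      have := Summable.sum_add_tsum_nat_add (f := A) N hAsum
      linarith
    calc (∑' m, A (m + N) * x j (m + N)) ≤ (∑' m, A (m + N)) * M := h1.trans h2.le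
      _ = (tA - ∑ n ∈ Finset.range N, A n) * M := by rw [h3]
      _ ≤ (ε / (2 * (M + 1))) * M := mul_le_mul_of_nonneg_right hN.le hM0
      _ ≤ ε / 2 := by
          rw [div_mul_eq_mul_div, div_le_div_iff₀ (by positivity) (by norm_num)]
          nlinarith
  linarith

variable {T : C₀(ℕ, ℝ) →L[ℝ] C₀(ℕ, ℝ)}

noncomputable def a (T : C₀(ℕ, ℝ) →L[ℝ] C₀(ℕ, ℝ)) (k n : ℕ) : ℝ := T (ee n) k

lemma sum_a_mul_eq (T : C₀(ℕ, ℝ) →L[ℝ] C₀(ℕ, ℝ)) (x : ℕ →ᵇ ℝ) (k N : ℕ) :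
    ∑ n ∈ Finset.range N, a T k n * x n = T (trunc x N) k := by
  rw [trunc, map_sum, c0_sum_apply]
  refine Finset.sum_congr rfl fun n _ => ?_
  rw [map_smul]
  show a T k n * x n = (x n • (T (ee n))) k
  rw [ZeroAtInftyContinuousMap.coe_smul]
  simp [a, mul_comm]

lemma sum_a_eq (T : C₀(ℕ, ℝ) →L[ℝ] C₀(ℕ, ℝ)) (k N : ℕ) :
    ∑ n ∈ Finset.range N, a T k n
      = T (trunc (BoundedContinuousFunction.const ℕ (1:ℝ)) N) k := by
  rw [← sum_a_mul_eq]
  simp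

variable (hT : ∀ x : C₀(ℕ, ℝ), (∀ k : ℕ, 0 ≤ x k) → ∀ k : ℕ, 0 ≤ T x k)
include hT

lemma a_nonneg (k n : ℕ) : 0 ≤ a T k n := hT (ee n) (ee_nonneg n) k

omit hT in
lemma sum_a_le (k N : ℕ) : ∑ n ∈ Finset.range N, a T k n ≤ ‖T‖ := by
  rw [sum_a_eq]
  calc T (trunc (BoundedContinuousFunction.const ℕ (1:ℝ)) N) k
      ≤ |T (trunc (BoundedContinuousFunction.const ℕ (1:ℝ)) N) k| := le_abs_self _
    _ ≤ ‖T (trunc (BoundedContinuousFunction.const ℕ (1:ℝ)) N)‖ := c0_abs_apply_le_norm _ k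
    _ ≤ ‖T‖ * ‖trunc (BoundedContinuousFunction.const ℕ (1:ℝ)) N‖ := T.le_opNorm _
    _ ≤ ‖T‖ * 1 := by
        refine mul_le_mul_of_nonneg_left ?_ (norm_nonneg T)
        simpa using norm_trunc_le (BoundedContinuousFunction.const ℕ (1:ℝ)) N
    _ = ‖T‖ := mul_one _

lemma summable_a (k : ℕ) : Summable (a T k) :=
  summable_of_sum_range_le (a_nonneg hT k) (sum_a_le k)

lemma tsum_a_le (k : ℕ) : ∑' n, a T k n ≤ ‖T‖ :=
  Summable.tsum_le_of_sum_range_le (summable_a hT k) (sum_a_le k)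

lemma summable_ax (k : ℕ) (x : ℕ →ᵇ ℝ) : Summable (fun n => a T k n * x n) := by
  refine Summable.of_norm_bounded ((summable_a hT k).mul_right ‖x‖) fun n => ?_
  rw [Real.norm_eq_abs, abs_mul, abs_of_nonneg (a_nonneg hT k n)]
  exact mul_le_mul_of_nonneg_left (x.norm_coe_le_norm n) (a_nonneg hT k n)

lemma tsum_ax_le' (k : ℕ) (x : ℕ →ᵇ ℝ) :
    ‖∑' n, a T k n * x n‖ ≤ (∑' n, a T k n) * ‖x‖ := by
  calc ‖∑' n, a T k n * x n‖ ≤ ∑' n, ‖a T k n * x n‖ :=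
        norm_tsum_le_tsum_norm ((summable_ax hT k x).norm)
    _ ≤ ∑' n, a T k n * ‖x‖ := by
        refine Summable.tsum_le_tsum (fun n => ?_) (summable_ax hT k x).norm
          ((summable_a hT k).mul_right ‖x‖)
        rw [Real.norm_eq_abs, abs_mul, abs_of_nonneg (a_nonneg hT k n)]
        exact mul_le_mul_of_nonneg_left (x.norm_coe_le_norm n) (a_nonneg hT k n)
    _ = (∑' n, a T k n) * ‖x‖ := tsum_mul_right

lemma tsum_ax_le (k : ℕ) (x : ℕ →ᵇ ℝ) : ‖∑' n, a T k n * x n‖ ≤ ‖T‖ * ‖x‖ :=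
  le_trans (tsum_ax_le' hT k x)
    (mul_le_mul_of_nonneg_right (tsum_a_le hT k) (norm_nonneg x))

noncomputable def Sf (x : ℕ →ᵇ ℝ) : ℕ →ᵇ ℝ :=
  BoundedContinuousFunction.ofNormedAddCommGroup (fun k => ∑' n, a T k n * x n)
    continuous_of_discreteTopology (‖T‖ * ‖x‖) (fun k => tsum_ax_le hT k x)

@[simp] lemma Sf_apply (x : ℕ →ᵇ ℝ) (k : ℕ) : Sf hT x k = ∑' n, a T k n * x n := rfl

noncomputable def S : (ℕ →ᵇ ℝ) →L[ℝ] (ℕ →ᵇ ℝ) :=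
  LinearMap.mkContinuous
    { toFun := Sf hT
      map_add' := fun x y => by
        ext k
        simp only [Sf_apply, BoundedContinuousFunction.add_apply, BoundedContinuousFunction.coe_add,
          Pi.add_apply]
        rw [← Summable.tsum_add (summable_ax hT k x) (summable_ax hT k y)]
        simp [mul_add]
      map_smul' := fun c x => by
        ext k
        simp only [Sf_apply, BoundedContinuousFunction.coe_smul, Pi.smul_apply, smul_eq_mul,
          RingHom.id_apply]
        rw [← tsum_mul_left]
        congr 1; funext n; ring }
    ‖T‖ (fun x => by
      refine (BoundedContinuousFunction.norm_le ?_).2 fun k => tsum_ax_le hT k x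
      positivity)

@[simp] lemma S_apply (x : ℕ →ᵇ ℝ) (k : ℕ) : S hT x k = ∑' n, a T k n * x n := rfl

lemma norm_S_le : ‖S hT‖ ≤ ‖T‖ := LinearMap.mkContinuous_norm_le _ (norm_nonneg T) _

lemma S_pos (x : ℕ →ᵇ ℝ) (hx : 0 ≤ x) : 0 ≤ S hT x := by
  intro k
  simp only [S_apply, BoundedContinuousFunction.coe_zero, Pi.zero_apply]
  exact tsum_nonneg fun n => mul_nonneg (a_nonneg hT k n) (hx n)

lemma S_extends (x : C₀(ℕ, ℝ)) : S hT x.toBCF = (T x).toBCF := by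
  ext k
  show (∑' n, a T k n * x.toBCF n) = T x k
  have h1 : Tendsto (fun N => ∑ n ∈ Finset.range N, a T k n * x.toBCF n) atTop
      (nhds (∑' n, a T k n * x.toBCF n)) :=
    (summable_ax hT k x.toBCF).hasSum.tendsto_sum_nat
  have h2 : ∀ N, ∑ n ∈ Finset.range N, a T k n * x.toBCF n = T (trunc x.toBCF N) k :=
    fun N => sum_a_mul_eq T x.toBCF k N
  have h3 : Tendsto (fun N => T (trunc x.toBCF N) k) atTop (nhds (T x k)) := by
    exact (continuous_c0_eval k).continuousAt.tendsto.comp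
      ((T.continuous.tendsto x).comp (tendsto_trunc x))
  rw [funext h2] at h1
  exact tendsto_nhds_unique h1 h3

lemma S_ordcont : IsOrderContinuousOp (S hT) := by
  intro ι p hne hdir x hmono hglb
  letI := p
  haveI := hne
  have hx0 : ∀ i, (0 : ℕ →ᵇ ℝ) ≤ x i := fun i => hglb.1 ⟨i, rfl⟩
  constructor
  · rintro _ ⟨i, rfl⟩
    exact S_pos hT _ (hx0 i)
  · intro b hb
    intro k
    show b k ≤ (0 : ℕ →ᵇ ℝ) k
    simp only [BoundedContinuousFunction.coe_zero, Pi.zero_apply]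
    refine le_of_forall_pos_le_add fun ε hε => ?_
    obtain ⟨i, hi⟩ := key_est (a T k) (a_nonneg hT k) (summable_a hT k) hdir x hmono hx0 hglb
      (fun i => summable_ax hT k (x i)) hε
    have hbk : b k ≤ S hT (x i) k := hb (Set.mem_range_self i) k
    rw [S_apply] at hbk
    linarith

/-- key uniqueness-related facts for any operator with the three properties -/
lemma approx_facts (S' : (ℕ →ᵇ ℝ) →L[ℝ] (ℕ →ᵇ ℝ))
    (hpos : ∀ x : ℕ →ᵇ ℝ, 0 ≤ x → 0 ≤ S' x)
    (hoc : IsOrderContinuousOp S')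
    (hext : ∀ x : C₀(ℕ, ℝ), S' x.toBCF = (T x).toBCF)
    (x : ℕ →ᵇ ℝ) (hx : (0 : ℕ →ᵇ ℝ) ≤ x) (k : ℕ) :
    (∀ N, T (trunc x N) k ≤ S' x k) ∧
      (∀ ε : ℝ, 0 < ε → ∃ N, S' x k - T (trunc x N) k < ε) := by
  set y : ℕ → ℕ →ᵇ ℝ := fun N => x - (trunc x N).toBCF with hy
  have hy_apply : ∀ N m, y N m = x m - trunc x N m := fun N m => rfl
  have hy0 : ∀ N, (0 : ℕ →ᵇ ℝ) ≤ y N := by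
    intro N m
    show (0 : ℕ →ᵇ ℝ) m ≤ y N m
    rw [hy_apply, trunc_apply]
    simp only [BoundedContinuousFunction.coe_zero, Pi.zero_apply]
    split
    · simp
    · simpa using hx m
  have hymono : ∀ N M : ℕ, N ≤ M → y M ≤ y N := by
    intro N M h m
    show y M m ≤ y N m
    rw [hy_apply, hy_apply, trunc_apply, trunc_apply]
    have hxm : 0 ≤ x m := hx m
    by_cases h1 : m < N
    · rw [if_pos h1, if_pos (lt_of_lt_of_le h1 h)]
    · rw [if_neg h1]
      split <;> linarith
  have hyglb : IsGLB (Set.range y) 0 := by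
    constructor
    · rintro _ ⟨N, rfl⟩
      exact hy0 N
    · intro b hb m
      have h5 : b m ≤ y (m + 1) m := hb (Set.mem_range_self (m + 1)) m
      have h6 : y (m + 1) m = 0 := by
        rw [hy_apply, trunc_apply, if_pos (Nat.lt_succ_self m)]; ring
      show b m ≤ (0 : ℕ →ᵇ ℝ) m
      simp only [BoundedContinuousFunction.coe_zero, Pi.zero_apply]
      rw [h6] at h5
      exact h5
  have himg : ∀ N, S' (y N) = S' x - (T (trunc x N)).toBCF := by
    intro N
    rw [hy, map_sub, hext (trunc x N)]
  have hSy0 : ∀ N, (0 : ℕ →ᵇ ℝ) ≤ S' (y N) := fun N => hpos _ (hy0 N)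
  have himg' : ∀ N, S' (y N) k = S' x k - T (trunc x N) k := by
    intro N
    rw [himg N]
    simp only [BoundedContinuousFunction.coe_sub, Pi.sub_apply,
      ZeroAtInftyContinuousMap.toBCF_apply]
  constructor
  · intro N
    have h5 : (0 : ℕ →ᵇ ℝ) k ≤ S' (y N) k := hSy0 N k
    rw [himg' N] at h5
    simp only [BoundedContinuousFunction.coe_zero, Pi.zero_apply] at h5
    linarith
  · intro ε hε
    have hglb' : IsGLB (Set.range fun N => S' (y N)) 0 := by
      refine hoc ℕ inferInstance ⟨0⟩ (fun i j => ⟨max i j, le_max_left _ _, le_max_right _ _⟩)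
        y hymono hyglb
    obtain ⟨N, hN⟩ := exists_lt_of_glb (fun N => S' (y N)) hSy0 hglb' k hε
    refine ⟨N, ?_⟩
    have h5 : S' (y N) k < ε := hN
    rw [himg' N] at h5
    linarith

lemma S_unique (S' : (ℕ →ᵇ ℝ) →L[ℝ] (ℕ →ᵇ ℝ))
    (hpos : ∀ x : ℕ →ᵇ ℝ, 0 ≤ x → 0 ≤ S' x)
    (hoc : IsOrderContinuousOp S')
    (hext : ∀ x : C₀(ℕ, ℝ), S' x.toBCF = (T x).toBCF) :
    S' = S hT := by
  have hagree : ∀ x : ℕ →ᵇ ℝ, (0 : ℕ →ᵇ ℝ) ≤ x → S' x = S hT x := by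
    intro x hx
    ext k
    have hf1 := approx_facts hT S' hpos hoc hext x hx k
    have hf2 := approx_facts hT (S hT) (S_pos hT) (S_ordcont hT) (S_extends hT) x hx k
    refine le_antisymm ?_ ?_
    · refine le_of_forall_pos_le_add fun ε hε => ?_
      obtain ⟨N, hN⟩ := hf1.2 ε hε
      have := hf2.1 N
      linarith
    · refine le_of_forall_pos_le_add fun ε hε => ?_
      obtain ⟨N, hN⟩ := hf2.2 ε hε
      have := hf1.1 N
      linarith
  refine ContinuousLinearMap.ext fun x => ?_
  have h1 : (0 : ℕ →ᵇ ℝ) ≤ x + ‖x‖ • BoundedContinuousFunction.const ℕ (1:ℝ) := by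
    intro m
    show (0 : ℕ →ᵇ ℝ) m ≤ (x + ‖x‖ • BoundedContinuousFunction.const ℕ (1:ℝ)) m
    simp only [BoundedContinuousFunction.coe_zero, Pi.zero_apply,
      BoundedContinuousFunction.coe_add, Pi.add_apply, BoundedContinuousFunction.coe_smul,
      Pi.smul_apply, BoundedContinuousFunction.const_apply, smul_eq_mul, mul_one]
    have h3 := x.norm_coe_le_norm m
    rw [Real.norm_eq_abs] at h3
    linarith [neg_abs_le (x m)]
  have h2 : (0 : ℕ →ᵇ ℝ) ≤ ‖x‖ • BoundedContinuousFunction.const ℕ (1:ℝ) := by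
    intro m
    show (0 : ℕ →ᵇ ℝ) m ≤ (‖x‖ • BoundedContinuousFunction.const ℕ (1:ℝ)) m
    simp [norm_nonneg]
  have hxc : (x + ‖x‖ • BoundedContinuousFunction.const ℕ (1:ℝ))
      - ‖x‖ • BoundedContinuousFunction.const ℕ (1:ℝ) = x :=
    add_sub_cancel_right x _
  calc S' x = S' ((x + ‖x‖ • BoundedContinuousFunction.const ℕ (1:ℝ))
        - ‖x‖ • BoundedContinuousFunction.const ℕ (1:ℝ)) := by rw [hxc]
    _ = S' (x + ‖x‖ • BoundedContinuousFunction.const ℕ (1:ℝ))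
        - S' (‖x‖ • BoundedContinuousFunction.const ℕ (1:ℝ)) := map_sub _ _ _
    _ = S hT (x + ‖x‖ • BoundedContinuousFunction.const ℕ (1:ℝ))
        - S hT (‖x‖ • BoundedContinuousFunction.const ℕ (1:ℝ)) := by
        rw [hagree _ h1, hagree _ h2]
    _ = S hT ((x + ‖x‖ • BoundedContinuousFunction.const ℕ (1:ℝ))
        - ‖x‖ • BoundedContinuousFunction.const ℕ (1:ℝ)) := (map_sub _ _ _).symm
    _ = S hT x := by rw [hxc]

lemma norm_S_eq : ‖S hT‖ = ‖T‖ := by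
  refine le_antisymm (norm_S_le hT) ?_
  refine T.opNorm_le_bound (norm_nonneg (S hT)) fun x => ?_
  rw [← norm_toBCF_eq_norm (f := T x), ← S_extends hT, ← norm_toBCF_eq_norm (f := x)]
  exact (S hT).le_opNorm x.toBCF

lemma S_one_apply (k : ℕ) :
    S hT (BoundedContinuousFunction.const ℕ (1:ℝ)) k = ∑' n, a T k n := by
  rw [S_apply]
  simp

lemma norm_S_one : ‖S hT (BoundedContinuousFunction.const ℕ (1:ℝ))‖ = ‖T‖ := by
  refine le_antisymm ?_ ?_
  · calc ‖S hT (BoundedContinuousFunction.const ℕ (1:ℝ))‖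
        ≤ ‖S hT‖ * ‖BoundedContinuousFunction.const ℕ (1:ℝ)‖ := (S hT).le_opNorm _
      _ = ‖T‖ := by rw [norm_S_eq hT]; simp
  · refine T.opNorm_le_bound (norm_nonneg (S hT (BoundedContinuousFunction.const ℕ (1:ℝ)))) fun x => ?_
    rw [← norm_toBCF_eq_norm (f := T x), ← S_extends hT, ← norm_toBCF_eq_norm (f := x)]
    refine (BoundedContinuousFunction.norm_le
      (mul_nonneg (norm_nonneg _) (norm_nonneg _))).2 fun k => ?_
    calc ‖S hT x.toBCF k‖ = ‖∑' n, a T k n * x.toBCF n‖ := by rw [S_apply]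
      _ ≤ (∑' n, a T k n) * ‖x.toBCF‖ := tsum_ax_le' hT k x.toBCF
      _ ≤ ‖S hT (BoundedContinuousFunction.const ℕ (1:ℝ))‖ * ‖x.toBCF‖ := by
          refine mul_le_mul_of_nonneg_right ?_ (norm_nonneg _)
          rw [← S_one_apply hT k]
          calc S hT (BoundedContinuousFunction.const ℕ (1:ℝ)) k
              ≤ ‖S hT (BoundedContinuousFunction.const ℕ (1:ℝ)) k‖ := le_abs_self _
            _ ≤ _ := (S hT _).norm_coe_le_norm k

lemma Tχ_nonneg (N k : ℕ) : 0 ≤ T (trunc (BoundedContinuousFunction.const ℕ (1:ℝ)) N) k := by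
  refine hT _ (fun m => ?_) k
  rw [trunc_apply]
  split <;> simp

lemma Tχ_mono_ptwise {N M : ℕ} (h : N ≤ M) (k : ℕ) :
    T (trunc (BoundedContinuousFunction.const ℕ (1:ℝ)) N) k
      ≤ T (trunc (BoundedContinuousFunction.const ℕ (1:ℝ)) M) k := by
  have hd : ∀ m : ℕ, 0 ≤ (trunc (BoundedContinuousFunction.const ℕ (1:ℝ)) M
      - trunc (BoundedContinuousFunction.const ℕ (1:ℝ)) N) m := by
    intro m
    rw [ZeroAtInftyContinuousMap.coe_sub, Pi.sub_apply, trunc_apply, trunc_apply]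
    by_cases h1 : m < N
    · rw [if_pos h1, if_pos (lt_of_lt_of_le h1 h)]
      simp
    · rw [if_neg h1]
      split <;> simp
  have h2 := hT _ hd k
  rw [map_sub, ZeroAtInftyContinuousMap.coe_sub, Pi.sub_apply] at h2
  linarith

lemma norm_Tχ_mono :
    Monotone (fun N => ‖T (trunc (BoundedContinuousFunction.const ℕ (1:ℝ)) N)‖) := by
  intro N M h
  simp only
  rw [← norm_toBCF_eq_norm, ← norm_toBCF_eq_norm]
  refine (BoundedContinuousFunction.norm_le (norm_nonneg _)).2 fun k => ?_
  calc ‖(T (trunc (BoundedContinuousFunction.const ℕ (1:ℝ)) N)).toBCF k‖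
      = |T (trunc (BoundedContinuousFunction.const ℕ (1:ℝ)) N) k| := by
        rw [ZeroAtInftyContinuousMap.toBCF_apply, Real.norm_eq_abs]
    _ = T (trunc (BoundedContinuousFunction.const ℕ (1:ℝ)) N) k :=
        abs_of_nonneg (Tχ_nonneg hT N k)
    _ ≤ T (trunc (BoundedContinuousFunction.const ℕ (1:ℝ)) M) k := Tχ_mono_ptwise hT h k
    _ ≤ |T (trunc (BoundedContinuousFunction.const ℕ (1:ℝ)) M) k| := le_abs_self _
    _ ≤ ‖T (trunc (BoundedContinuousFunction.const ℕ (1:ℝ)) M)‖ := c0_abs_apply_le_norm _ k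
    _ = ‖(T (trunc (BoundedContinuousFunction.const ℕ (1:ℝ)) M)).toBCF‖ :=
        (norm_toBCF_eq_norm).symm

omit hT in
lemma norm_Tχ_le (N : ℕ) :
    ‖T (trunc (BoundedContinuousFunction.const ℕ (1:ℝ)) N)‖ ≤ ‖T‖ := by
  calc ‖T (trunc (BoundedContinuousFunction.const ℕ (1:ℝ)) N)‖
      ≤ ‖T‖ * ‖trunc (BoundedContinuousFunction.const ℕ (1:ℝ)) N‖ := T.le_opNorm _
    _ ≤ ‖T‖ * 1 := by
        refine mul_le_mul_of_nonneg_left ?_ (norm_nonneg T)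
        simpa using norm_trunc_le (BoundedContinuousFunction.const ℕ (1:ℝ)) N
    _ = ‖T‖ := mul_one _

lemma tendsto_norm_Tχ :
    Tendsto (fun N : ℕ => ‖T (trunc (BoundedContinuousFunction.const ℕ (1:ℝ)) N)‖) atTop
      (nhds ‖T‖) := by
  have hbdd : BddAbove (Set.range fun N : ℕ =>
      ‖T (trunc (BoundedContinuousFunction.const ℕ (1:ℝ)) N)‖) := by
    refine ⟨‖T‖, ?_⟩
    rintro _ ⟨N, rfl⟩
    exact norm_Tχ_le N
  have h := tendsto_atTop_ciSup (norm_Tχ_mono hT) hbdd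
  set L := ⨆ N : ℕ, ‖T (trunc (BoundedContinuousFunction.const ℕ (1:ℝ)) N)‖ with hL
  have hL0 : 0 ≤ L :=
    le_trans (norm_nonneg (T (trunc (BoundedContinuousFunction.const ℕ (1:ℝ)) 0)))
      (le_ciSup hbdd 0)
  have hle : L ≤ ‖T‖ := ciSup_le fun N => norm_Tχ_le N
  have hge : ‖T‖ ≤ L := by
    refine T.opNorm_le_bound hL0 fun x => ?_
    rw [← norm_toBCF_eq_norm (f := T x), ← S_extends hT, ← norm_toBCF_eq_norm (f := x)]
    refine (BoundedContinuousFunction.norm_le (mul_nonneg hL0 (norm_nonneg _))).2 fun k => ?_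
    have htsum : (∑' n, a T k n) ≤ L := by
      refine Summable.tsum_le_of_sum_range_le (summable_a hT k) fun N => ?_
      rw [sum_a_eq]
      exact le_trans (le_trans (le_abs_self _) (c0_abs_apply_le_norm _ k)) (le_ciSup hbdd N)
    calc ‖S hT x.toBCF k‖ = ‖∑' n, a T k n * x.toBCF n‖ := by rw [S_apply]
      _ ≤ (∑' n, a T k n) * ‖x.toBCF‖ := tsum_ax_le' hT k x.toBCF
      _ ≤ L * ‖x.toBCF‖ := mul_le_mul_of_nonneg_right htsum (norm_nonneg _)
  have : L = ‖T‖ := le_antisymm hle hge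
  rwa [this] at h

lemma isLUB_norm (g : ℕ →ᵇ ℝ)
    (hg : IsLUB (Set.range fun N : ℕ =>
      (T (trunc (BoundedContinuousFunction.const ℕ (1:ℝ)) N)).toBCF) g) :
    ‖g‖ = ‖T‖ := by
  have hub : S hT (BoundedContinuousFunction.const ℕ (1:ℝ)) ∈ upperBounds
      (Set.range fun N : ℕ =>
        (T (trunc (BoundedContinuousFunction.const ℕ (1:ℝ)) N)).toBCF) := by
    rintro _ ⟨N, rfl⟩
    intro k
    show (T (trunc (BoundedContinuousFunction.const ℕ (1:ℝ)) N)).toBCF k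
      ≤ S hT (BoundedContinuousFunction.const ℕ (1:ℝ)) k
    rw [ZeroAtInftyContinuousMap.toBCF_apply, ← sum_a_eq, S_one_apply hT]
    exact Summable.sum_le_tsum _ (fun n _ => a_nonneg hT k n) (summable_a hT k)
  have hg1 : g ≤ S hT (BoundedContinuousFunction.const ℕ (1:ℝ)) := hg.2 hub
  have hg2 : S hT (BoundedContinuousFunction.const ℕ (1:ℝ)) ≤ g := by
    intro k
    show S hT (BoundedContinuousFunction.const ℕ (1:ℝ)) k ≤ g k
    rw [S_one_apply hT]
    refine Summable.tsum_le_of_sum_range_le (summable_a hT k) fun N => ?_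
    rw [sum_a_eq]
    have h5 : (T (trunc (BoundedContinuousFunction.const ℕ (1:ℝ)) N)).toBCF k ≤ g k :=
      hg.1 (Set.mem_range_self N) k
    rw [ZeroAtInftyContinuousMap.toBCF_apply] at h5
    exact h5
  have hge : g = S hT (BoundedContinuousFunction.const ℕ (1:ℝ)) := le_antisymm hg1 hg2
  rw [hge, norm_S_one hT]

end Stmt9

/-- Every positive bounded linear operator `T` on `c₀ = C₀(ℕ, ℝ)`
extends uniquely to a positive order continuous bounded linear operator `S` on
`ℓ∞ = ℕ →ᵇ ℝ`; moreover `‖T‖ = ‖S‖ = ‖S 𝟙‖ = lim_N ‖T 𝟙_{{0,…,N−1}}‖` and `‖T‖` equals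
the norm of the supremum of the `T 𝟙_{{0,…,N−1}}` in `ℓ∞`. Here `𝟙` is the constant-one
sequence and `χ N = 𝟙_{{0,…,N−1}}` is the indicator of the first `N` coordinates. -/
theorem positive_operator_on_c0_extends_uniquely_to_linfty
    (T : C₀(ℕ, ℝ) →L[ℝ] C₀(ℕ, ℝ))
    (hT : ∀ x : C₀(ℕ, ℝ), (∀ k : ℕ, 0 ≤ x k) → ∀ k : ℕ, 0 ≤ T x k)
    (χ : ℕ → C₀(ℕ, ℝ)) (hχ : ∀ N k : ℕ, χ N k = if k < N then 1 else 0) :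
    ∃ S : (ℕ →ᵇ ℝ) →L[ℝ] (ℕ →ᵇ ℝ),
      ((∀ x : ℕ →ᵇ ℝ, 0 ≤ x → 0 ≤ S x) ∧ IsOrderContinuousOp S ∧
        ∀ x : C₀(ℕ, ℝ), S x.toBCF = (T x).toBCF) ∧
      (∀ S' : (ℕ →ᵇ ℝ) →L[ℝ] (ℕ →ᵇ ℝ),
        ((∀ x : ℕ →ᵇ ℝ, 0 ≤ x → 0 ≤ S' x) ∧ IsOrderContinuousOp S' ∧
          ∀ x : C₀(ℕ, ℝ), S' x.toBCF = (T x).toBCF) → S' = S) ∧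
      ‖S‖ = ‖T‖ ∧
      ‖S (BoundedContinuousFunction.const ℕ (1 : ℝ))‖ = ‖T‖ ∧
      Tendsto (fun N : ℕ => ‖T (χ N)‖) atTop (nhds ‖T‖) ∧
      (∀ g : ℕ →ᵇ ℝ, IsLUB (Set.range fun N : ℕ => (T (χ N)).toBCF) g → ‖g‖ = ‖T‖) := by
  have hχeq : ∀ N, χ N = Stmt9.trunc (BoundedContinuousFunction.const ℕ (1:ℝ)) N := by
    intro N
    apply DFunLike.ext
    intro k
    rw [hχ, Stmt9.trunc_apply]
    simp
  refine ⟨Stmt9.S hT, ⟨Stmt9.S_pos hT, Stmt9.S_ordcont hT, Stmt9.S_extends hT⟩,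
    fun S' h => Stmt9.S_unique hT S' h.1 h.2.1 h.2.2, Stmt9.norm_S_eq hT, Stmt9.norm_S_one hT,
    ?_, ?_⟩
  · simp only [hχeq]
    exact Stmt9.tendsto_norm_Tχ hT
  · intro g hg
    simp only [hχeq] at hg
    exact Stmt9.isLUB_norm hT g hg
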